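/- Let (r₀, m₀, ρ₀) be a small-hard-star background in comoving coordinates on [0,B], with ψ₀ = −(1/2)·ln(2ρ₀ − 1), so that ∂_χψ₀ = ((m₀/r₀² + 4πr₀(ρ₀−1))/(1 − 2m₀/r₀))·∂_χ r₀. Suppose C² functions r₁, ρ₁, ψ₁, ω₁, m₁ of (φ,χ) ∈ ℝ × [0,B] satisfy the linearised equations: (i) ρ₁ = −(2ρ₀−1)ψ₁; (ii) (2/r₀)·r₁ − ψ₁ + ω₁ = 0; (iii) m₁ = −4πr₀²(ρ₀−1)·r₁; (iv) −m₁/r₀ + (m₀/r₀²)·r₁ = −(1 − 2m₀/r₀)·ω₁ + (1 − 2m₀/r₀)·(∂_χ r₁)/(∂_χ r₀); (v) (2ρ₀−1)·∂²_φ r₁ + (2ω₁ − (∂_χψ₁)/(∂_χψ₀) − (∂_χ r₁)/(∂_χ r₀))·(m₀/r₀² + 4πr₀(ρ₀−1)) = −m₁/r₀² + 2(m₀/r₀³)·r₁ − 4π(ρ₀−1)·r₁ − 4πr₀·ρ₁. Then: ψ₁ = (2/r₀ − (∂_χψ₀)/(∂_χ r₀))·r₁ + (∂_χ r₁)/(∂_χ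 r₀), ω₁ = (∂_χ r₁)/(∂_χ r₀) − ((∂_χψ₀)/(∂_χ r₀))·r₁, and r₁ satisfies the decoupled master wave equation: (2ρ₀−1)·∂²_φ r₁ − (m₀/r₀² + 4πr₀(ρ₀−1))·(1/∂_χψ₀)·∂_χ((∂_χ r₁)/(∂_χ r₀)) = [2·((∂_χψ₀)/(∂_χ r₀))·(m₀/r₀² + 4πr₀(ρ₀−1)) + 2m₀/r₀³ + 4πr₀(2ρ₀−1)·(2/r₀ − (∂_χψ₀)/(∂_χ r₀))]·r₁ + (m₀/r₀² + 4πr₀(ρ₀−1))·(1/∂_χψ₀)·∂_χ[(2/r₀ − (∂_χψ₀)/(∂_χ r₀))·r₁] + (4πr₀ρ₀ − m₀/r₀²)·(∂_χ r₁)/(∂_χ r₀). -/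

import Mathlib

open Real Set Filter Topology

noncomputable section

/-- `f` is C¹ on `s`. -/
def C1On (f : ℝ → ℝ) (s : Set ℝ) : Prop :=
  (∀ x ∈ s, DifferentiableAt ℝ f x) ∧ ContinuousOn (deriv f) s

/-- A small hard star of radius `R` with smallness constant `C`
(units `G = c = ρ₀ = 1`). -/
def IsSmallStar (C R : ℝ) (m ρ : ℝ → ℝ) : Prop :=
  0 < R ∧ ContinuousOn m (Icc 0 R) ∧ ContinuousOn ρ (Icc 0 R) ∧
  m 0 = 0 ∧ ρ R = 1 ∧
  (∀ r ∈ Ioo (0:ℝ) R,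
    HasDerivAt m (4 * π * r ^ 2 * ρ r) r ∧
    HasDerivAt ρ (-((2 * ρ r - 1) / (r - 2 * m r)) *
      (m r / r + 4 * π * r ^ 2 * (ρ r - 1))) r) ∧
  (∀ r ∈ Ioc (0:ℝ) R,
    1 ≤ ρ r ∧ ρ r ≤ 1 + C * R ^ 2 ∧
    1 ≤ 3 / (4 * π) * (m r / r ^ 3) ∧
    3 / (4 * π) * (m r / r ^ 3) ≤ 1 + C * R ^ 2)

/-- The comoving derivative `dr/dχ = g(r) = √(1 − 2m(r)/r)/(4πr²√(2ρ(r)−1))`. -/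
def gfun (m ρ : ℝ → ℝ) (r : ℝ) : ℝ :=
  Real.sqrt (1 - 2 * m r / r) / (4 * π * r ^ 2 * Real.sqrt (2 * ρ r - 1))

/-- Comoving coordinates: `r₀ : [0,B] → [0,R]` solves `∂_χ r₀ = g(r₀)`,
`r₀(0) = 0`, `r₀(B) = R`. -/
def IsComoving (R B : ℝ) (m ρ r₀ : ℝ → ℝ) : Prop :=
  0 < B ∧ r₀ 0 = 0 ∧ r₀ B = R ∧ ContinuousOn r₀ (Icc 0 B) ∧
  (∀ χ ∈ Icc (0:ℝ) B, r₀ χ ∈ Icc 0 R) ∧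
  ∀ χ ∈ Ioc (0:ℝ) B, HasDerivAt r₀ (gfun m ρ (r₀ χ)) χ

/-- Partial derivative in the comoving spatial coordinate `χ`. -/
def Dchi (f : ℝ → ℝ → ℝ) : ℝ → ℝ → ℝ := fun φ χ => deriv (f φ) χ

/-- Partial derivative in the comoving time coordinate `φ`. -/
def Dphi (f : ℝ → ℝ → ℝ) : ℝ → ℝ → ℝ := fun φ χ => deriv (fun t => f t χ) φ

/-- `∂_χψ₀ = ((m₀/r₀² + 4πr₀(ρ₀−1))/(1 − 2m₀/r₀))·∂_χ r₀` for
`ψ₀ = −(1/2)ln(2ρ₀−1)`. -/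
def dpsi0 (m ρ r₀ : ℝ → ℝ) (χ : ℝ) : ℝ :=
  (m (r₀ χ) / r₀ χ ^ 2 + 4 * π * r₀ χ * (ρ (r₀ χ) - 1)) /
    (1 - 2 * m (r₀ χ) / r₀ χ) * gfun m ρ (r₀ χ)

/-- The decoupled master wave equation for the linearised radius `r₁` at `(φ,χ)`. -/
def MasterEq (m ρ r₀ : ℝ → ℝ) (r₁ : ℝ → ℝ → ℝ) (φ χ : ℝ) : Prop :=
  (2 * ρ (r₀ χ) - 1) * Dphi (Dphi r₁) φ χ
    - (m (r₀ χ) / r₀ χ ^ 2 + 4 * π * r₀ χ * (ρ (r₀ χ) - 1)) * (1 / dpsi0 m ρ r₀ χ) *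
      deriv (fun x => Dchi r₁ φ x / gfun m ρ (r₀ x)) χ
  = (2 * (dpsi0 m ρ r₀ χ / gfun m ρ (r₀ χ)) *
        (m (r₀ χ) / r₀ χ ^ 2 + 4 * π * r₀ χ * (ρ (r₀ χ) - 1))
      + 2 * m (r₀ χ) / r₀ χ ^ 3
      + 4 * π * r₀ χ * (2 * ρ (r₀ χ) - 1) *
        (2 / r₀ χ - dpsi0 m ρ r₀ χ / gfun m ρ (r₀ χ))) * r₁ φ χ
    + (m (r₀ χ) / r₀ χ ^ 2 + 4 * π * r₀ χ * (ρ (r₀ χ) - 1)) * (1 / dpsi0 m ρ r₀ χ) *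
      deriv (fun x => (2 / r₀ x - dpsi0 m ρ r₀ x / gfun m ρ (r₀ x)) * r₁ φ x) χ
    + (4 * π * r₀ χ * ρ (r₀ χ) - m (r₀ χ) / r₀ χ ^ 2) *
      (Dchi r₁ φ χ / gfun m ρ (r₀ χ))

section Helpers

variable {Cs R B : ℝ} {m ρ r₀ : ℝ → ℝ}

lemma one_le_CR (hstar : IsSmallStar Cs R m ρ) : 1 ≤ 1 + Cs * R ^ 2 := by
  obtain ⟨hR, -, -, -, hρR, -, hbd⟩ := hstar
  have h := (hbd R ⟨hR, le_refl R⟩).2.1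
  rw [hρR] at h; exact h

lemma mass_lb (hstar : IsSmallStar Cs R m ρ) {r : ℝ} (hr : r ∈ Ioc 0 R) :
    4 * π / 3 * r ^ 3 ≤ m r := by
  obtain ⟨hR, -, -, -, -, -, hbd⟩ := hstar
  have h := (hbd r hr).2.2.1
  have hπ := Real.pi_pos
  have hr0 := hr.1
  have hr3 : 0 < r ^ 3 := by positivity
  rw [div_mul_eq_mul_div, le_div_iff₀ (by positivity : (0:ℝ) < 4*π)] at h
  rw [show 4 * π / 3 * r ^ 3 = 4 * π / 3 * r ^ 3 from rfl]
  have h3 : 4 * π / 3 ≤ m r / r ^ 3 := by linarith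
  rw [le_div_iff₀ hr3] at h3
  linarith

lemma mass_ub (hstar : IsSmallStar Cs R m ρ) {r : ℝ} (hr : r ∈ Ioc 0 R) :
    m r ≤ 4 * π / 3 * (1 + Cs * R ^ 2) * r ^ 3 := by
  obtain ⟨hR, -, -, -, -, -, hbd⟩ := hstar
  have h := (hbd r hr).2.2.2
  have hπ := Real.pi_pos
  have hr0 := hr.1
  have hr3 : 0 < r ^ 3 := by positivity
  rw [div_mul_eq_mul_div, div_le_iff₀ (by positivity : (0:ℝ) < 4*π)] at h
  have h3 : m r / r ^ 3 ≤ 4 * π / 3 * (1 + Cs * R ^ 2) := by linarith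
  rw [div_le_iff₀ hr3] at h3
  linarith

lemma w_small (hstar : IsSmallStar Cs R m ρ) {r : ℝ} (hr : r ∈ Ioc 0 R)
    (hsm : r ^ 2 ≤ 3 / (16 * π * (1 + Cs * R ^ 2))) :
    1 / 2 ≤ 1 - 2 * m r / r := by
  have hπ := Real.pi_pos
  have hr0 := hr.1
  have hC : (0:ℝ) < 1 + Cs * R ^ 2 := lt_of_lt_of_le one_pos (one_le_CR hstar)
  have hub := mass_ub hstar hr
  have key : 4 * π / 3 * (1 + Cs * R ^ 2) * (3 / (16 * π * (1 + Cs * R ^ 2))) = 1 / 4 := by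
    field_simp
    ring
  have ha : (0:ℝ) < 4 * π / 3 * (1 + Cs * R ^ 2) := by positivity
  have h1 : 2 * m r / r ≤ 2 * (4 * π / 3 * (1 + Cs * R ^ 2)) * r ^ 2 := by
    rw [div_le_iff₀ hr0]
    nlinarith
  have h2 : 4 * π / 3 * (1 + Cs * R ^ 2) * r ^ 2 ≤ 1 / 4 := by
    calc 4 * π / 3 * (1 + Cs * R ^ 2) * r ^ 2
        ≤ 4 * π / 3 * (1 + Cs * R ^ 2) * (3 / (16 * π * (1 + Cs * R ^ 2))) :=
          mul_le_mul_of_nonneg_left hsm (le_of_lt ha)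
      _ = 1 / 4 := key
  linarith

set_option maxHeartbeats 2000000 in
lemma w_pos (hstar : IsSmallStar Cs R m ρ) : ∀ r ∈ Ioc (0:ℝ) R, 0 < r - 2 * m r := by
  have hπ := Real.pi_pos
  have hC : (0:ℝ) < 1 + Cs * R ^ 2 := lt_of_lt_of_le one_pos (one_le_CR hstar)
  obtain ⟨hR, hmc, hρc, hm0, hρR, hode, hbd⟩ := hstar
  have hstar' : IsSmallStar Cs R m ρ := ⟨hR, hmc, hρc, hm0, hρR, hode, hbd⟩
  by_contra hcon
  push_neg at hcon
  obtain ⟨rb, hrb, hwb⟩ := hcon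
  -- small radius positivity
  obtain ⟨δ, hδdef⟩ : ∃ δ:ℝ, δ = min R (Real.sqrt (3 / (16 * π * (1 + Cs * R ^ 2)))) := ⟨_, rfl⟩
  have hδpos : 0 < δ := by
    rw [hδdef]; exact lt_min hR (Real.sqrt_pos.mpr (by positivity))
  have hsmall : ∀ r ∈ Ioc (0:ℝ) R, r < δ → 0 < r - 2 * m r := by
    intro r hr hrδ
    have h12 := w_small (Cs := Cs) hstar' hr ?_
    · have hr0 := hr.1
      have heq : 1 - 2 * m r / r = (r - 2 * m r) / r := by field_simp
      rw [heq, le_div_iff₀ hr0] at h12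
      linarith
    · rw [hδdef] at hrδ
      have h1 : r < Real.sqrt (3 / (16 * π * (1 + Cs * R ^ 2))) :=
        lt_of_lt_of_le hrδ (min_le_right _ _)
      have := Real.sq_sqrt (le_of_lt (show (0:ℝ) < 3 / (16 * π * (1 + Cs * R ^ 2)) by positivity))
      nlinarith [hr.1]
  -- the first touching point s
  have hsubδ : Icc δ R ⊆ Icc 0 R := Icc_subset_Icc (le_of_lt hδpos) le_rfl
  have hwc : ContinuousOn (fun r => r - 2 * m r) (Icc δ R) :=
    continuousOn_id.sub (continuousOn_const.mul (hmc.mono hsubδ))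
  have hTclosed : IsClosed (Icc δ R ∩ (fun r => r - 2 * m r) ⁻¹' Iic 0) :=
    hwc.preimage_isClosed_of_isClosed isClosed_Icc isClosed_Iic
  have hrbδ : δ ≤ rb := by
    by_contra hlt
    push_neg at hlt
    exact absurd hwb (not_le.mpr (hsmall rb hrb hlt))
  have hTne : (Icc δ R ∩ (fun r => r - 2 * m r) ⁻¹' Iic 0).Nonempty :=
    ⟨rb, ⟨⟨hrbδ, hrb.2⟩, hwb⟩⟩
  have hTbdd : BddBelow (Icc δ R ∩ (fun r => r - 2 * m r) ⁻¹' Iic 0) :=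
    (bddBelow_Icc).mono inter_subset_left
  obtain ⟨s, hsT, hsLB⟩ : ∃ s, s ∈ (Icc δ R ∩ (fun r => r - 2 * m r) ⁻¹' Iic 0) ∧
      ∀ y ∈ (Icc δ R ∩ (fun r => r - 2 * m r) ⁻¹' Iic 0), s ≤ y :=
    ⟨sInf _, hTclosed.csInf_mem hTne hTbdd, fun y hy => csInf_le hTbdd hy⟩
  obtain ⟨⟨hδs, hsR⟩, hws⟩ := hsT
  have hws : s - 2 * m s ≤ 0 := hws
  have hs0 : 0 < s := lt_of_lt_of_le hδpos hδs
  have hwpos : ∀ x, 0 < x → x < s → 0 < x - 2 * m x := by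
    intro x hx0 hxs
    by_cases hxδ : x < δ
    · exact hsmall x ⟨hx0, le_trans (le_of_lt hxs) hsR⟩ hxδ
    · push_neg at hxδ
      by_contra hle
      push_neg at hle
      have : s ≤ x := hsLB x ⟨⟨hxδ, le_trans (le_of_lt hxs) hsR⟩, hle⟩
      linarith
  -- constants
  obtain ⟨L, hLdef⟩ : ∃ L:ℝ, L = 8 * π * R ^ 2 * (1 + Cs * R ^ 2) + 1 := ⟨_, rfl⟩
  have hL1 : 1 ≤ L := by
    have : (0:ℝ) ≤ 8 * π * R ^ 2 * (1 + Cs * R ^ 2) := by positivity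
    rw [hLdef]; linarith
  have hL0 : 0 < L := lt_of_lt_of_le one_pos hL1
  obtain ⟨δ₁, hδ₁def⟩ : ∃ d:ℝ, d = 4 * π / 3 * (s / 2) ^ 2 := ⟨_, rfl⟩
  have hδ₁0 : 0 < δ₁ := by rw [hδ₁def]; positivity
  have hsubs : Icc (s / 2) s ⊆ Icc 0 R := Icc_subset_Icc (by linarith) hsR
  -- upper bound for w near s
  have hwub : ∀ x ∈ Icc (s / 2) s, x - 2 * m x ≤ L * (s - x) := by
    have hmono : MonotoneOn (fun x => x - 2 * m x + L * x) (Icc (s / 2) s) := by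
      apply monotoneOn_of_hasDerivWithinAt_nonneg (convex_Icc _ _)
        (f' := fun x => 1 - 2 * (4 * π * x ^ 2 * ρ x) + L * 1)
      · exact (continuousOn_id.sub (continuousOn_const.mul (hmc.mono hsubs))).add
          (continuousOn_const.mul continuousOn_id)
      · intro x hx
        rw [interior_Icc] at hx
        have hxIoo : x ∈ Ioo (0:ℝ) R := ⟨by linarith [hx.1], lt_of_lt_of_le hx.2 hsR⟩
        exact (((hasDerivAt_id' x).sub ((hode x hxIoo).1.const_mul 2)).add
          ((hasDerivAt_id' x).const_mul L)).hasDerivWithinAt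
      · intro x hx
        rw [interior_Icc] at hx
        have hxIoo : x ∈ Ioo (0:ℝ) R := ⟨by linarith [hx.1], lt_of_lt_of_le hx.2 hsR⟩
        have hρb := hbd x ⟨hxIoo.1, le_of_lt hxIoo.2⟩
        have hx2 : x ^ 2 * ρ x ≤ R ^ 2 * (1 + Cs * R ^ 2) := by
          apply mul_le_mul _ hρb.2.1 (by linarith [hρb.1]) (by positivity)
          exact pow_le_pow_left₀ (le_of_lt hxIoo.1) (le_of_lt hxIoo.2) 2
        rw [hLdef]
        nlinarith [hx2]
    intro x hx
    have h2 := hmono hx (right_mem_Icc.mpr (by linarith)) hx.2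
    dsimp only at h2
    linarith
  -- the comparison function ζ is antitone near s
  have hζanti : ∀ b, s / 2 ≤ b → b < s →
      ρ b - δ₁ / L * Real.log (s - b) ≤ ρ (s / 2) - δ₁ / L * Real.log (s - s / 2) := by
    intro b hb1 hb2
    have hsubb : Icc (s / 2) b ⊆ Icc 0 R := Icc_subset_Icc (by linarith) (by linarith)
    have hanti : AntitoneOn (fun x => ρ x - δ₁ / L * Real.log (s - x)) (Icc (s / 2) b) := by
      apply antitoneOn_of_hasDerivWithinAt_nonpos (convex_Icc _ _)
        (f' := fun x => -((2 * ρ x - 1) / (x - 2 * m x)) * (m x / x + 4 * π * x ^ 2 * (ρ x - 1))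
          - δ₁ / L * ((-1) / (s - x)))
      · apply (hρc.mono hsubb).sub
        apply continuousOn_const.mul
        apply ContinuousOn.log (continuousOn_const.sub continuousOn_id)
        intro x hx
        have : x ≤ b := hx.2
        simp only [Pi.sub_apply, id]
        intro h
        nlinarith
      · intro x hx
        rw [interior_Icc] at hx
        have hxIoo : x ∈ Ioo (0:ℝ) R := ⟨by linarith [hx.1], by linarith [hx.2, hsR]⟩
        have hlog : HasDerivAt (fun y => Real.log (s - y)) ((-1) / (s - x)) x := by
          have h1 : HasDerivAt (fun y => s - y) (-1) x := (hasDerivAt_id' x).const_sub s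
          exact h1.log (by intro h; nlinarith [hx.2])
        exact (((hode x hxIoo).2).sub (hlog.const_mul (δ₁ / L))).hasDerivWithinAt
      · intro x hx
        rw [interior_Icc] at hx
        have hxIoo : x ∈ Ioo (0:ℝ) R := ⟨by linarith [hx.1], by linarith [hx.2, hsR]⟩
        have hsx : 0 < s - x := by linarith [hx.2]
        -- estimates
        have hρb := hbd x ⟨hxIoo.1, le_of_lt hxIoo.2⟩
        have hwx : 0 < x - 2 * m x := hwpos x hxIoo.1 (by linarith [hx.2])
        have hwux : x - 2 * m x ≤ L * (s - x) := hwub x ⟨le_of_lt hx.1, by linarith [hx.2]⟩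
        have hKx : δ₁ ≤ m x / x + 4 * π * x ^ 2 * (ρ x - 1) := by
          have hml := mass_lb (Cs := Cs) hstar' ⟨hxIoo.1, le_of_lt hxIoo.2⟩
          have h1 : 4 * π / 3 * x ^ 2 ≤ m x / x := by
            rw [le_div_iff₀ hxIoo.1]
            nlinarith
          have h2 : δ₁ ≤ 4 * π / 3 * x ^ 2 := by
            have : (s / 2) ^ 2 ≤ x ^ 2 := by nlinarith [hx.1, hs0]
            rw [hδ₁def]
            nlinarith [Real.pi_pos]
          nlinarith [mul_nonneg (mul_nonneg (by positivity : (0:ℝ) ≤ 4 * π) (sq_nonneg x))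
            (by linarith [hρb.1] : (0:ℝ) ≤ ρ x - 1)]
        have hρ1 : 1 ≤ 2 * ρ x - 1 := by linarith [hρb.1]
        have hstep1 : -((2 * ρ x - 1) / (x - 2 * m x)) * (m x / x + 4 * π * x ^ 2 * (ρ x - 1))
            ≤ -(δ₁ / (x - 2 * m x)) := by
          rw [neg_mul, neg_le_neg_iff, div_mul_eq_mul_div, div_le_div_iff_of_pos_right hwx]
          nlinarith
        have hstep2 : δ₁ / (L * (s - x)) ≤ δ₁ / (x - 2 * m x) := by gcongr
        have heqd : δ₁ / L * ((-1) / (s - x)) = -(δ₁ / (L * (s - x))) := by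
          field_simp
        rw [heqd]
        linarith [hstep1, hstep2]
    have := hanti (left_mem_Icc.mpr hb1) (right_mem_Icc.mpr hb1) hb1
    dsimp only at this
    exact this
  -- choose b close to s and derive the contradiction
  obtain ⟨t, htdef⟩ : ∃ t:ℝ, t = min (s / 4)
      (Real.exp ((1 - (ρ (s / 2) - δ₁ / L * Real.log (s - s / 2))) * L / δ₁ - 1)) := ⟨_, rfl⟩
  have ht0 : 0 < t := by rw [htdef]; exact lt_min (by linarith) (Real.exp_pos _)
  have hts4 : t ≤ s / 4 := by rw [htdef]; exact min_le_left _ _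
  have hb1 : s / 2 ≤ s - t := by linarith
  have hb2 : s - t < s := by linarith
  have hρb1 : 1 ≤ ρ (s - t) := (hbd (s - t) ⟨by linarith, by linarith⟩).1
  have hζb := hζanti (s - t) hb1 hb2
  have hsb : s - (s - t) = t := by ring
  rw [hsb] at hζb
  have hlogt : Real.log t ≤ (1 - (ρ (s / 2) - δ₁ / L * Real.log (s - s / 2))) * L / δ₁ - 1 := by
    rw [Real.log_le_iff_le_exp ht0, htdef]
    exact min_le_right _ _
  have hmul : δ₁ / L * Real.log t ≤
      (1 - (ρ (s / 2) - δ₁ / L * Real.log (s - s / 2))) - δ₁ / L := by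
    have h1 : δ₁ / L * Real.log t ≤
        δ₁ / L * ((1 - (ρ (s / 2) - δ₁ / L * Real.log (s - s / 2))) * L / δ₁ - 1) :=
      mul_le_mul_of_nonneg_left hlogt (by positivity)
    have h2 : δ₁ / L * ((1 - (ρ (s / 2) - δ₁ / L * Real.log (s - s / 2))) * L / δ₁ - 1)
        = (1 - (ρ (s / 2) - δ₁ / L * Real.log (s - s / 2))) - δ₁ / L := by
      field_simp
    linarith
  have hpos : (0:ℝ) < δ₁ / L := by positivity
  linarith

lemma gfun_nonneg (r : ℝ) : 0 ≤ gfun m ρ r := by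
  apply div_nonneg (Real.sqrt_nonneg _)
  have := Real.pi_pos
  positivity

lemma r0_mono (hcom : IsComoving R B m ρ r₀) : MonotoneOn r₀ (Icc 0 B) := by
  obtain ⟨hB, h00, hBR, hc, hmap, hd⟩ := hcom
  apply monotoneOn_of_hasDerivWithinAt_nonneg (convex_Icc _ _) hc
    (f' := fun χ => gfun m ρ (r₀ χ))
  · intro x hx
    rw [interior_Icc] at hx
    exact (hd x ⟨hx.1, le_of_lt hx.2⟩).hasDerivWithinAt
  · intro x _
    exact gfun_nonneg _

lemma glb_small (hstar : IsSmallStar Cs R m ρ) (hCs : 0 ≤ Cs) {r : ℝ} (hr0 : 0 < r) (hrR : r ≤ R)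
    (hrδ : r ≤ Real.sqrt (3 / (16 * π * (1 + Cs * R ^ 2)))) :
    3 / (4 * π) * (Real.sqrt (1 / 2) / Real.sqrt (1 + 2 * Cs * R ^ 2))
      ≤ 3 * r ^ 2 * gfun m ρ r := by
  have hπ := Real.pi_pos
  have hC : (0:ℝ) < 1 + Cs * R ^ 2 := lt_of_lt_of_le one_pos (one_le_CR hstar)
  have hρb := hstar.2.2.2.2.2.2 r ⟨hr0, hrR⟩
  have hsq : r ^ 2 ≤ 3 / (16 * π * (1 + Cs * R ^ 2)) := by
    have h2 := Real.sq_sqrt (le_of_lt (show (0:ℝ) < 3 / (16 * π * (1 + Cs * R ^ 2)) by positivity))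
    nlinarith [Real.sqrt_nonneg (3 / (16 * π * (1 + Cs * R ^ 2)))]
  have h12 := w_small hstar ⟨hr0, hrR⟩ hsq
  have hρpos : (0:ℝ) < 2 * ρ r - 1 := by linarith [hρb.1]
  have hsρ : 0 < Real.sqrt (2 * ρ r - 1) := Real.sqrt_pos.mpr hρpos
  have hgeq : 3 * r ^ 2 * gfun m ρ r
      = 3 / (4 * π) * (Real.sqrt (1 - 2 * m r / r) / Real.sqrt (2 * ρ r - 1)) := by
    rw [gfun]
    field_simp
  rw [hgeq]
  apply mul_le_mul_of_nonneg_left _ (by positivity)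
  apply div_le_div₀ (Real.sqrt_nonneg _)
    (Real.sqrt_le_sqrt (by linarith)) hsρ
    (Real.sqrt_le_sqrt (by linarith [hρb.2.1]))

lemma r0_pos (hstar : IsSmallStar Cs R m ρ) (hCs : 0 ≤ Cs) (hcom : IsComoving R B m ρ r₀) :
    ∀ χ ∈ Ioo (0:ℝ) B, 0 < r₀ χ := by
  have hπ := Real.pi_pos
  have hC : (0:ℝ) < 1 + Cs * R ^ 2 := lt_of_lt_of_le one_pos (one_le_CR hstar)
  have hmono := r0_mono hcom
  have hR : 0 < R := hstar.1
  intro χb hχb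
  by_contra hnp
  push_neg at hnp
  obtain ⟨hB, h00, hBR, hc, hmap, hd⟩ := hcom
  have hrb0 : r₀ χb = 0 :=
    le_antisymm hnp (hmap χb ⟨le_of_lt hχb.1, le_of_lt hχb.2⟩).1
  -- the top of the zero set
  have hZclosed : IsClosed (Icc 0 B ∩ r₀ ⁻¹' {0}) :=
    hc.preimage_isClosed_of_isClosed isClosed_Icc isClosed_singleton
  have hZne : (Icc 0 B ∩ r₀ ⁻¹' {0}).Nonempty := ⟨χb, ⟨le_of_lt hχb.1, le_of_lt hχb.2⟩, hrb0⟩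
  have hZbdd : BddAbove (Icc 0 B ∩ r₀ ⁻¹' {0}) := bddAbove_Icc.mono inter_subset_left
  obtain ⟨χ₀, hZ, hUB⟩ : ∃ c, c ∈ (Icc 0 B ∩ r₀ ⁻¹' {0}) ∧
      ∀ y ∈ (Icc 0 B ∩ r₀ ⁻¹' {0}), y ≤ c :=
    ⟨sSup _, hZclosed.csSup_mem hZne hZbdd, fun y hy => le_csSup hZbdd hy⟩
  obtain ⟨⟨hχ₀0, hχ₀B⟩, hr₀χ₀⟩ := hZ
  have hr₀χ₀ : r₀ χ₀ = 0 := hr₀χ₀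
  have hχ₀B' : χ₀ < B := by
    rcases lt_or_eq_of_le hχ₀B with h | h
    · exact h
    · exfalso; rw [h, hBR] at hr₀χ₀; linarith
  have hχ₀pos : 0 < χ₀ := lt_of_lt_of_le hχb.1 (hUB χb ⟨⟨le_of_lt hχb.1, le_of_lt hχb.2⟩, hrb0⟩)
  have hpos' : ∀ x, χ₀ < x → x ≤ B → 0 < r₀ x := by
    intro x hx1 hx2
    rcases lt_or_eq_of_le (hmap x ⟨by linarith, hx2⟩).1 with h | h
    · exact h
    · exfalso
      have : x ≤ χ₀ := hUB x ⟨⟨by linarith, hx2⟩, h.symm⟩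
      linarith
  -- derivative of r₀ vanishes at χ₀
  have hg0 : gfun m ρ (r₀ χ₀) = 0 := by rw [hr₀χ₀]; simp [gfun]
  have hder : HasDerivAt r₀ 0 χ₀ := by
    have := hd χ₀ ⟨hχ₀pos, hχ₀B⟩; rwa [hg0] at this
  -- choose χ₁ with r₀ small on [χ₀, χ₁]
  obtain ⟨δ', hδ'def⟩ : ∃ d:ℝ, d = min R (Real.sqrt (3 / (16 * π * (1 + Cs * R ^ 2)))) := ⟨_, rfl⟩
  have hδ'pos : 0 < δ' := by rw [hδ'def]; exact lt_min hR (Real.sqrt_pos.mpr (by positivity))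
  have hGle : 𝓝[Ioc χ₀ B] χ₀ ≤ 𝓝[Icc 0 B] χ₀ :=
    nhdsWithin_mono _ (fun y hy => ⟨by linarith [hy.1], hy.2⟩)
  have hGne : (𝓝[Ioc χ₀ B] χ₀).NeBot := left_nhdsWithin_Ioc_neBot hχ₀B'
  have hcw : Tendsto r₀ (𝓝[Icc 0 B] χ₀) (𝓝 0) := by
    have := hc χ₀ ⟨hχ₀0, hχ₀B⟩
    rwa [ContinuousWithinAt, hr₀χ₀] at this
  have hev1 : ∀ᶠ x in 𝓝[Ioc χ₀ B] χ₀, r₀ x < δ' :=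
    (hcw.mono_left hGle).eventually_lt_const hδ'pos
  have hev2 : ∀ᶠ x in 𝓝[Ioc χ₀ B] χ₀, x ∈ Ioc χ₀ B :=
    eventually_mem_nhdsWithin
  obtain ⟨χ₁, hδ₁, hIoc⟩ := (hev1.and hev2).exists
  have hχ₀χ₁ : χ₀ < χ₁ := hIoc.1
  have hχ₁B : χ₁ ≤ B := hIoc.2
  have hδbound : ∀ x ∈ Icc χ₀ χ₁, r₀ x ≤ δ' := by
    intro x hx
    refine le_trans (hmono ⟨le_trans hχ₀0 hx.1, le_trans hx.2 hχ₁B⟩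
      ⟨by linarith [hχ₀0, hχ₀χ₁], hχ₁B⟩ hx.2) (le_of_lt hδ₁)
  -- the constant c
  obtain ⟨cc, hccdef⟩ : ∃ c:ℝ, c = 3 / (4 * π) *
      (Real.sqrt (1 / 2) / Real.sqrt (1 + 2 * Cs * R ^ 2)) := ⟨_, rfl⟩
  have h2C : (0:ℝ) < 1 + 2 * Cs * R ^ 2 := by nlinarith [hCs, sq_nonneg R]
  have hcc0 : 0 < cc := by
    rw [hccdef]
    have h1 : (0:ℝ) < Real.sqrt (1 / 2) := Real.sqrt_pos.mpr (by norm_num)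
    have h2 : (0:ℝ) < Real.sqrt (1 + 2 * Cs * R ^ 2) := Real.sqrt_pos.mpr h2C
    positivity
  have hsub01 : Icc χ₀ χ₁ ⊆ Icc 0 B := Icc_subset_Icc hχ₀0 hχ₁B
  -- cube growth
  have hkey : ∀ x ∈ Icc χ₀ χ₁, cc * (x - χ₀) ≤ (r₀ x) ^ 3 := by
    have hmono3 : MonotoneOn (fun χ => r₀ χ ^ 3 - cc * χ) (Icc χ₀ χ₁) := by
      apply monotoneOn_of_hasDerivWithinAt_nonneg (convex_Icc _ _)
        (f' := fun x => 3 * r₀ x ^ 2 * gfun m ρ (r₀ x) - cc * 1)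
      · exact ((hc.mono hsub01).pow 3).sub (continuousOn_const.mul continuousOn_id)
      · intro x hx
        rw [interior_Icc] at hx
        have hdx := hd x ⟨by linarith [hx.1, hχ₀pos], by linarith [hx.2, hχ₁B]⟩
        have h3 : HasDerivAt (fun χ => r₀ χ ^ 3) (3 * r₀ x ^ 2 * gfun m ρ (r₀ x)) x := by
          have h4 := hdx.pow 3
          norm_num at h4
          exact h4
        exact (h3.sub ((hasDerivAt_id' x).const_mul cc)).hasDerivWithinAt
      · intro x hx
        rw [interior_Icc] at hx
        have hx0 : 0 < r₀ x := hpos' x hx.1 (by linarith [hx.2, hχ₁B])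
        have hxR : r₀ x ≤ R := (hmap x ⟨by linarith [hχ₀0, hx.1], by linarith [hx.2, hχ₁B]⟩).2
        have hxδ : r₀ x ≤ δ' := hδbound x ⟨le_of_lt hx.1, le_of_lt hx.2⟩
        rw [hδ'def] at hxδ
        have hg := glb_small hstar hCs hx0 hxR (le_trans hxδ (min_le_right _ _))
        rw [← hccdef] at hg
        show 0 ≤ 3 * r₀ x ^ 2 * gfun m ρ (r₀ x) - cc * 1
        linarith
    intro x hx
    have h2 := hmono3 (left_mem_Icc.mpr (le_of_lt hχ₀χ₁)) hx hx.1
    dsimp only at h2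
    rw [hr₀χ₀] at h2
    nlinarith [h2]
  -- contradiction with vanishing derivative
  have hslope : Tendsto (slope r₀ χ₀) (𝓝[>] χ₀) (𝓝 0) :=
    (hasDerivAt_iff_tendsto_slope.mp hder).mono_left
      (nhdsWithin_mono _ (fun y hy => ne_of_gt hy))
  have hevs : ∀ᶠ x in 𝓝[>] χ₀, slope r₀ χ₀ x < 1 := hslope.eventually_lt_const one_pos
  have hminpos : 0 < min 1 cc := lt_min one_pos hcc0
  have hev2' : ∀ᶠ x in 𝓝[>] χ₀, x ∈ Ioo χ₀ (min χ₁ (χ₀ + min 1 cc)) :=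
    eventually_of_mem (Ioo_mem_nhdsGT (lt_min hχ₀χ₁ (by linarith))) (fun y hy => hy)
  obtain ⟨x, hs1, hs2⟩ := (hevs.and hev2').exists
  have ht0 : 0 < x - χ₀ := by linarith [hs2.1]
  have hxχ₁ : x ≤ χ₁ := le_of_lt (lt_of_lt_of_le hs2.2 (min_le_left _ _))
  have htlt : x - χ₀ < min 1 cc := by
    have := lt_of_lt_of_le hs2.2 (min_le_right _ _); linarith
  rw [slope_def_field, hr₀χ₀, sub_zero] at hs1
  have hr₀x : 0 < r₀ x := hpos' x hs2.1 (le_trans hxχ₁ hχ₁B)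
  have hrlt : r₀ x < x - χ₀ := by rwa [div_lt_one ht0] at hs1
  have hcube : r₀ x ^ 3 < (x - χ₀) ^ 3 :=
    pow_lt_pow_left₀ hrlt (le_of_lt hr₀x) (by norm_num)
  have hk := hkey x ⟨le_of_lt hs2.1, hxχ₁⟩
  have h1' : x - χ₀ ≤ 1 := le_of_lt (lt_of_lt_of_le htlt (min_le_left _ _))
  have h2' : x - χ₀ < cc := lt_of_lt_of_le htlt (min_le_right _ _)
  nlinarith [hk, hcube, ht0, h1', h2', mul_pos ht0 ht0]

lemma r0_lt_R (hstar : IsSmallStar Cs R m ρ) (hcom : IsComoving R B m ρ r₀) :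
    ∀ χ ∈ Ioo (0:ℝ) B, r₀ χ < R := by
  have hπ := Real.pi_pos
  have hR : 0 < R := hstar.1
  have hwR : 0 < R - 2 * m R := w_pos hstar R ⟨hR, le_rfl⟩
  have hρR : ρ R = 1 := hstar.2.2.2.2.1
  obtain ⟨hB, h00, hBR, hc, hmap, hd⟩ := hcom
  intro χ hχ
  rcases lt_or_eq_of_le (hmap χ ⟨le_of_lt hχ.1, le_of_lt hχ.2⟩).2 with h | h
  · exact h
  · exfalso
    have hgR : 0 < gfun m ρ R := by
      rw [gfun, hρR]
      have h1 : (0:ℝ) < 1 - 2 * m R / R := by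
        rw [show (1:ℝ) - 2 * m R / R = (R - 2 * m R) / R by field_simp]
        exact div_pos hwR hR
      have : Real.sqrt (2 * 1 - 1) = 1 := by norm_num
      rw [this]
      exact div_pos (Real.sqrt_pos.mpr h1) (by positivity)
    have hder : HasDerivAt r₀ (gfun m ρ R) χ := by
      have := hd χ ⟨hχ.1, le_of_lt hχ.2⟩; rwa [h] at this
    have hslope : Tendsto (slope r₀ χ) (𝓝[>] χ) (𝓝 (gfun m ρ R)) :=
      (hasDerivAt_iff_tendsto_slope.mp hder).mono_left
        (nhdsWithin_mono _ (fun y hy => ne_of_gt hy))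
    have hev : ∀ᶠ y in 𝓝[>] χ, slope r₀ χ y ≤ 0 := by
      filter_upwards [eventually_of_mem (Ioo_mem_nhdsGT hχ.2) (fun y hy => hy)]
        with y hy
      rw [slope_def_field, h]
      apply div_nonpos_of_nonpos_of_nonneg
      · have := (hmap y ⟨by linarith [hy.1, hχ.1], le_of_lt hy.2⟩).2
        linarith
      · linarith [hy.1]
    have : gfun m ρ R ≤ 0 := le_of_tendsto hslope hev
    linarith

end Helpers

/-- Reduction of the linearised Einstein–Euler system around a small hard star to a
decoupled master wave equation for the linearised radius `r₁`, together with explicit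
formulas for `ψ₁` and `ω₁`. -/
theorem stmt11 (Cs R B : ℝ) (hCs : 0 < Cs) (m ρ r₀ : ℝ → ℝ)
    (hstar : IsSmallStar Cs R m ρ) (hcom : IsComoving R B m ρ r₀)
    (r₁ ρ₁ ψ₁ ω₁ m₁ : ℝ → ℝ → ℝ)
    (hreg₁ : ContDiffOn ℝ 2 (fun p : ℝ × ℝ => r₁ p.1 p.2) (univ ×ˢ Icc 0 B))
    (hreg₂ : ContDiffOn ℝ 2 (fun p : ℝ × ℝ => ρ₁ p.1 p.2) (univ ×ˢ Icc 0 B))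
    (hreg₃ : ContDiffOn ℝ 2 (fun p : ℝ × ℝ => ψ₁ p.1 p.2) (univ ×ˢ Icc 0 B))
    (hreg₄ : ContDiffOn ℝ 2 (fun p : ℝ × ℝ => ω₁ p.1 p.2) (univ ×ˢ Icc 0 B))
    (hreg₅ : ContDiffOn ℝ 2 (fun p : ℝ × ℝ => m₁ p.1 p.2) (univ ×ˢ Icc 0 B))
    -- (i) linearised equation of state ρ₁ = −(2ρ₀−1)ψ₁
    (heq₁ : ∀ φ : ℝ, ∀ χ ∈ Ioo (0:ℝ) B, ρ₁ φ χ = -(2 * ρ (r₀ χ) - 1) * ψ₁ φ χ)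
    -- (ii) linearised conservation law (2/r₀)r₁ − ψ₁ + ω₁ = 0
    (heq₂ : ∀ φ : ℝ, ∀ χ ∈ Ioo (0:ℝ) B,
      2 / r₀ χ * r₁ φ χ - ψ₁ φ χ + ω₁ φ χ = 0)
    -- (iii) first variation of the mass m₁ = −4πr₀²(ρ₀−1)r₁
    (heq₃ : ∀ φ : ℝ, ∀ χ ∈ Ioo (0:ℝ) B,
      m₁ φ χ = -(4 * π) * r₀ χ ^ 2 * (ρ (r₀ χ) - 1) * r₁ φ χ)
    -- (iv) linearised mass equation
    (heq₄ : ∀ φ : ℝ, ∀ χ ∈ Ioo (0:ℝ) B,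
      -(m₁ φ χ) / r₀ χ + m (r₀ χ) / r₀ χ ^ 2 * r₁ φ χ =
        -(1 - 2 * m (r₀ χ) / r₀ χ) * ω₁ φ χ
          + (1 - 2 * m (r₀ χ) / r₀ χ) * (Dchi r₁ φ χ / gfun m ρ (r₀ χ)))
    -- (v) linearised Hessian equation
    (heq₅ : ∀ φ : ℝ, ∀ χ ∈ Ioo (0:ℝ) B,
      (2 * ρ (r₀ χ) - 1) * Dphi (Dphi r₁) φ χ
        + (2 * ω₁ φ χ - Dchi ψ₁ φ χ / dpsi0 m ρ r₀ χ
            - Dchi r₁ φ χ / gfun m ρ (r₀ χ)) *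
          (m (r₀ χ) / r₀ χ ^ 2 + 4 * π * r₀ χ * (ρ (r₀ χ) - 1)) =
        -(m₁ φ χ) / r₀ χ ^ 2 + 2 * (m (r₀ χ) / r₀ χ ^ 3) * r₁ φ χ
          - 4 * π * (ρ (r₀ χ) - 1) * r₁ φ χ - 4 * π * r₀ χ * ρ₁ φ χ) :
    ∀ φ : ℝ, ∀ χ ∈ Ioo (0:ℝ) B,
      ψ₁ φ χ = (2 / r₀ χ - dpsi0 m ρ r₀ χ / gfun m ρ (r₀ χ)) * r₁ φ χ
          + Dchi r₁ φ χ / gfun m ρ (r₀ χ) ∧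
      ω₁ φ χ = Dchi r₁ φ χ / gfun m ρ (r₀ χ)
          - dpsi0 m ρ r₀ χ / gfun m ρ (r₀ χ) * r₁ φ χ ∧
      MasterEq m ρ r₀ r₁ φ χ := by
  have hπ := Real.pi_pos
  obtain ⟨hR, hmc, hρc, hm0, hρR, hode, hbd⟩ := hstar
  have hstar' : IsSmallStar Cs R m ρ := ⟨hR, hmc, hρc, hm0, hρR, hode, hbd⟩
  obtain ⟨hB, h00, hBR, hrc, hmap, hrd⟩ := hcom
  have hcom' : IsComoving R B m ρ r₀ := ⟨hB, h00, hBR, hrc, hmap, hrd⟩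
  -- pointwise positivity facts
  have hfacts : ∀ χ ∈ Ioo (0:ℝ) B, 0 < r₀ χ ∧ r₀ χ < R ∧
      0 < 1 - 2 * m (r₀ χ) / r₀ χ ∧ 1 ≤ ρ (r₀ χ) ∧ 0 < gfun m ρ (r₀ χ) ∧
      0 < m (r₀ χ) / r₀ χ ^ 2 + 4 * π * r₀ χ * (ρ (r₀ χ) - 1) ∧
      0 < dpsi0 m ρ r₀ χ := by
    intro χ hχ
    have hr : 0 < r₀ χ := r0_pos hstar' (le_of_lt hCs) hcom' χ hχ
    have hrR : r₀ χ < R := r0_lt_R hstar' hcom' χ hχ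
    have hmem : r₀ χ ∈ Ioc (0:ℝ) R := ⟨hr, le_of_lt hrR⟩
    have hw' := w_pos hstar' (r₀ χ) hmem
    have hw : 0 < 1 - 2 * m (r₀ χ) / r₀ χ := by
      rw [show (1:ℝ) - 2 * m (r₀ χ) / r₀ χ = (r₀ χ - 2 * m (r₀ χ)) / r₀ χ by
        field_simp]
      exact div_pos hw' hr
    have hρ1 : 1 ≤ ρ (r₀ χ) := (hbd _ hmem).1
    have hsρ : 0 < Real.sqrt (2 * ρ (r₀ χ) - 1) := Real.sqrt_pos.mpr (by linarith)
    have hg : 0 < gfun m ρ (r₀ χ) := by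
      rw [gfun]
      exact div_pos (Real.sqrt_pos.mpr hw) (mul_pos (by positivity) hsρ)
    have hm : 0 < m (r₀ χ) :=
      lt_of_lt_of_le (by positivity) (mass_lb hstar' hmem)
    have hK : 0 < m (r₀ χ) / r₀ χ ^ 2 + 4 * π * r₀ χ * (ρ (r₀ χ) - 1) := by
      have h1 : 0 < m (r₀ χ) / r₀ χ ^ 2 := div_pos hm (by positivity)
      have h2 : 0 ≤ 4 * π * r₀ χ * (ρ (r₀ χ) - 1) := by
        apply mul_nonneg (by positivity); linarith
      linarith
    have hdp : 0 < dpsi0 m ρ r₀ χ := mul_pos (div_pos hK hw) hg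
    exact ⟨hr, hrR, hw, hρ1, hg, hK, hdp⟩
  -- the formulas for ψ₁ and ω₁
  have key : ∀ φ : ℝ, ∀ χ ∈ Ioo (0:ℝ) B,
      ψ₁ φ χ = (2 / r₀ χ - dpsi0 m ρ r₀ χ / gfun m ρ (r₀ χ)) * r₁ φ χ
          + Dchi r₁ φ χ / gfun m ρ (r₀ χ) ∧
      ω₁ φ χ = Dchi r₁ φ χ / gfun m ρ (r₀ χ)
          - dpsi0 m ρ r₀ χ / gfun m ρ (r₀ χ) * r₁ φ χ := by
    intro φ χ hχ
    obtain ⟨hr, hrR, hw, hρ1, hg, hK, hdp⟩ := hfacts χ hχ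
    have hdg : dpsi0 m ρ r₀ χ / gfun m ρ (r₀ χ) =
        (m (r₀ χ) / r₀ χ ^ 2 + 4 * π * r₀ χ * (ρ (r₀ χ) - 1)) /
          (1 - 2 * m (r₀ χ) / r₀ χ) := by
      rw [dpsi0]
      exact mul_div_cancel_right₀ _ (ne_of_gt hg)
    have hE4 := heq₄ φ χ hχ
    rw [heq₃ φ χ hχ] at hE4
    have hLK : -(-(4 * π) * r₀ χ ^ 2 * (ρ (r₀ χ) - 1) * r₁ φ χ) / r₀ χ
        + m (r₀ χ) / r₀ χ ^ 2 * r₁ φ χ =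
        (m (r₀ χ) / r₀ χ ^ 2 + 4 * π * r₀ χ * (ρ (r₀ χ) - 1)) * r₁ φ χ := by
      field_simp
      ring
    rw [hLK] at hE4
    have hω : ω₁ φ χ = Dchi r₁ φ χ / gfun m ρ (r₀ χ)
        - dpsi0 m ρ r₀ χ / gfun m ρ (r₀ χ) * r₁ φ χ := by
      rw [hdg]
      have hwne := ne_of_gt hw
      have h7 : ω₁ φ χ = ((1 - 2 * m (r₀ χ) / r₀ χ) * (Dchi r₁ φ χ / gfun m ρ (r₀ χ))
          - (m (r₀ χ) / r₀ χ ^ 2 + 4 * π * r₀ χ * (ρ (r₀ χ) - 1)) * r₁ φ χ)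
          / (1 - 2 * m (r₀ χ) / r₀ χ) := by
        rw [eq_div_iff hwne]
        linarith [hE4]
      rw [h7, sub_div, mul_div_cancel_left₀ _ hwne, mul_div_right_comm]
    refine ⟨?_, hω⟩
    have hE2 := heq₂ φ χ hχ
    have hψeq : ψ₁ φ χ = 2 / r₀ χ * r₁ φ χ + ω₁ φ χ := by linarith
    rw [hψeq, hω]
    ring
  intro φ χ hχ
  obtain ⟨hr, hrR, hw, hρ1, hg, hK, hdp⟩ := hfacts χ hχ
  refine ⟨(key φ χ hχ).1, (key φ χ hχ).2, ?_⟩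
  -- differentiability facts at χ
  have hrne : r₀ χ ≠ 0 := ne_of_gt hr
  have hr₀dAt : DifferentiableAt ℝ r₀ χ := (hrd χ ⟨hχ.1, le_of_lt hχ.2⟩).differentiableAt
  have hmem : r₀ χ ∈ Ioo (0:ℝ) R := ⟨hr, hrR⟩
  have hmr₀ : DifferentiableAt ℝ (fun x => m (r₀ x)) χ :=
    (hode _ hmem).1.differentiableAt.comp χ hr₀dAt
  have hρr₀ : DifferentiableAt ℝ (fun x => ρ (r₀ x)) χ :=
    (hode _ hmem).2.differentiableAt.comp χ hr₀dAt
  have hr₁C : ContDiffOn ℝ 2 (fun x => r₁ φ x) (Ioo 0 B) := by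
    have h2 : ContDiff ℝ 2 (fun x : ℝ => (φ, x)) := contDiff_const.prodMk contDiff_id
    exact hreg₁.comp h2.contDiffOn (fun x hx => ⟨mem_univ _, Ioo_subset_Icc_self hx⟩)
  have hr₁dAt : DifferentiableAt ℝ (fun x => r₁ φ x) χ :=
    ((hr₁C.differentiableOn (by norm_num)).differentiableAt (isOpen_Ioo.mem_nhds hχ))
  have hDchid : DifferentiableAt ℝ (fun x => Dchi r₁ φ x) χ := by
    have h1 : ContDiffOn ℝ 1 (deriv (fun x => r₁ φ x)) (Ioo 0 B) :=
      hr₁C.deriv_of_isOpen isOpen_Ioo (le_refl 2)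
    exact (h1.differentiableOn one_ne_zero).differentiableAt (isOpen_Ioo.mem_nhds hχ)
  have hgd : DifferentiableAt ℝ (fun x => gfun m ρ (r₀ x)) χ := by
    simp only [gfun]
    apply DifferentiableAt.div
    · apply DifferentiableAt.sqrt
      · exact (differentiableAt_const 1).sub ((hmr₀.const_mul 2).div hr₀dAt hrne)
      · exact ne_of_gt hw
    · apply DifferentiableAt.mul
      · exact (hr₀dAt.pow 2).const_mul (4 * π)
      · apply DifferentiableAt.sqrt
        · exact (hρr₀.const_mul 2).sub (differentiableAt_const 1)
        · have : (0:ℝ) < 2 * ρ (r₀ χ) - 1 := by linarith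
          exact ne_of_gt this
    · have hsρ : 0 < Real.sqrt (2 * ρ (r₀ χ) - 1) := Real.sqrt_pos.mpr (by linarith)
      exact ne_of_gt (mul_pos (by positivity) hsρ)
  have hQd : DifferentiableAt ℝ (fun x => (m (r₀ x) / r₀ x ^ 2
      + 4 * π * r₀ x * (ρ (r₀ x) - 1)) / (1 - 2 * m (r₀ x) / r₀ x)) χ := by
    apply DifferentiableAt.div
    · apply DifferentiableAt.add
      · exact hmr₀.div (hr₀dAt.pow 2) (pow_ne_zero 2 hrne)
      · exact ((hr₀dAt.const_mul (4 * π)).mul (hρr₀.sub (differentiableAt_const 1)))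
    · exact (differentiableAt_const 1).sub ((hmr₀.const_mul 2).div hr₀dAt hrne)
    · exact ne_of_gt hw
  have hAd : DifferentiableAt ℝ
      (fun x => 2 / r₀ x - dpsi0 m ρ r₀ x / gfun m ρ (r₀ x)) χ := by
    apply DifferentiableAt.congr_of_eventuallyEq
      (((differentiableAt_const 2).div hr₀dAt hrne).sub hQd)
    apply eventually_of_mem (isOpen_Ioo.mem_nhds hχ)
    intro x hx
    obtain ⟨hr', hrR', hw', hρ1', hg', hK', hdp'⟩ := hfacts x hx
    have : dpsi0 m ρ r₀ x / gfun m ρ (r₀ x) =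
        (m (r₀ x) / r₀ x ^ 2 + 4 * π * r₀ x * (ρ (r₀ x) - 1)) /
          (1 - 2 * m (r₀ x) / r₀ x) := by
      rw [dpsi0]
      exact mul_div_cancel_right₀ _ (ne_of_gt hg')
    show 2 / r₀ x - dpsi0 m ρ r₀ x / gfun m ρ (r₀ x)
        = 2 / r₀ x - (m (r₀ x) / r₀ x ^ 2 + 4 * π * r₀ x * (ρ (r₀ x) - 1)) /
          (1 - 2 * m (r₀ x) / r₀ x)
    rw [this]
  have hUd : DifferentiableAt ℝ (fun x => Dchi r₁ φ x / gfun m ρ (r₀ x)) χ :=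
    hDchid.div hgd (ne_of_gt hg)
  have hA1d : DifferentiableAt ℝ
      (fun x => (2 / r₀ x - dpsi0 m ρ r₀ x / gfun m ρ (r₀ x)) * r₁ φ x) χ :=
    hAd.mul hr₁dAt
  -- derivative of ψ₁ in χ
  have hψev : ψ₁ φ =ᶠ[𝓝 χ] fun x => (2 / r₀ x - dpsi0 m ρ r₀ x / gfun m ρ (r₀ x)) * r₁ φ x
      + Dchi r₁ φ x / gfun m ρ (r₀ x) := by
    apply eventually_of_mem (isOpen_Ioo.mem_nhds hχ)
    intro x hx
    exact (key φ x hx).1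
  have hDψ : Dchi ψ₁ φ χ =
      deriv (fun x => (2 / r₀ x - dpsi0 m ρ r₀ x / gfun m ρ (r₀ x)) * r₁ φ x) χ
      + deriv (fun x => Dchi r₁ φ x / gfun m ρ (r₀ x)) χ := by
    show deriv (ψ₁ φ) χ = _
    rw [hψev.deriv_eq]
    exact deriv_add hA1d hUd
  -- assemble the master equation
  have h5 := heq₅ φ χ hχ
  rw [hDψ, (key φ χ hχ).2, heq₁ φ χ hχ, (key φ χ hχ).1, heq₃ φ χ hχ] at h5
  have hm2 : -(-(4 * π) * r₀ χ ^ 2 * (ρ (r₀ χ) - 1) * r₁ φ χ) / r₀ χ ^ 2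
      = 4 * π * (ρ (r₀ χ) - 1) * r₁ φ χ := by
    field_simp
  rw [hm2] at h5
  rw [MasterEq]
  linear_combination h5

end
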